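/- Fix e ≥ 3. Let k ≥ 0 and let μ = (μ_1,...,μ_N) be a partition of d with N > k+1 parts and μ_{k+1} > 1, and let λ = (d-k, 1^k). Define T^λ_μ as the λ-tableau keeping the entries T^μ(2,1),...,T^μ(k+1,1) in the first column of λ and filling the remaining values in increasing order along the first row. Then the residue sequence of T^λ_μ equals i^μ if and only if there exist positive integers a_1,...,a_N and 0 ≤ m < e such that μ = (a_1 e, ..., a_k e, a_{k+1} e − 1, ..., a_{N-1} e − 1, a_N e − 1 − m). -/

import Mathlib

/- A partition `μ` is encoded as its list of parts `L`.  `resTrow e L r` is the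
residue of the node containing `r` in the row-reading standard tableau `T^μ`. -/

/-- Residue of the entry `r` of the row-reading tableau of the partition `L`. -/
def resTrow (e : ℕ) (L : List ℕ) (r : ℕ) : ZMod e :=
  let row := ((Finset.range L.length).filter fun a => (L.take a).sum < r).card - 1
  let col := r - (L.take row).sum
  (col : ZMod e) - 1 - (row : ZMod e)

/-- The entries of the first column of `T^μ` below the first row, down to row
`k` (0-indexed): these are the entries placed in the leg of the hook in `T^λ_μ`. -/
def legEntries (L : List ℕ) (k : ℕ) : Finset ℕ :=
  (Finset.Icc 1 k).image fun a => (L.take a).sum + 1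

/-- Residue of the entry `r` of `T^λ_μ`, the `(d-k, 1^k)`-tableau whose leg
carries the first-column entries `T^μ(2,1), ..., T^μ(k+1,1)` of `T^μ` and whose
first row carries the remaining entries in increasing order. -/
def resHook (e : ℕ) (L : List ℕ) (k : ℕ) (r : ℕ) : ZMod e :=
  if r ∈ legEntries L k then
    -(((((Finset.Icc 1 k).filter fun a => (L.take a).sum + 1 ≤ r).card : ℕ)) : ZMod e)
  else ((r - 1 - (((legEntries L k).filter fun x => x < r).card) : ℕ) : ZMod e)

namespace ResAux

lemma sum_take_mono (L : List ℕ) {a b : ℕ} (h : a ≤ b) :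
    (L.take a).sum ≤ (L.take b).sum := by
  have h1 : L.take a = (L.take b).take a := by rw [List.take_take, Nat.min_eq_left h]
  rw [h1]
  conv_rhs => rw [← List.take_append_drop a (L.take b)]
  rw [List.sum_append]
  exact Nat.le_add_right _ _

lemma sum_take_succ' (L : List ℕ) (hpos : ∀ x ∈ L, 0 < x) {a : ℕ} (ha : a < L.length) :
    (L.take a).sum + 1 ≤ (L.take (a + 1)).sum := by
  rw [List.sum_take_succ L a ha]
  have := hpos L[a] (List.getElem_mem ha)
  omega

lemma sum_take_strict (L : List ℕ) (hpos : ∀ x ∈ L, 0 < x) {a b : ℕ}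
    (h : a < b) (hb : b ≤ L.length) : (L.take a).sum < (L.take b).sum := by
  have h1 := sum_take_succ' L hpos (lt_of_lt_of_le h hb)
  have h2 := sum_take_mono L (show a + 1 ≤ b from h)
  omega

lemma le_sum_take (L : List ℕ) (hpos : ∀ x ∈ L, 0 < x) {j : ℕ} (hj : j ≤ L.length) :
    j ≤ (L.take j).sum := by
  induction j with
  | zero => simp
  | succ n ih =>
      have h1 := sum_take_succ' L hpos (show n < L.length by omega)
      have := ih (by omega)
      omega

lemma row_card (L : List ℕ) {j r : ℕ} (hjN : j < L.length)
    (h1 : (L.take j).sum < r) (h2 : r ≤ (L.take (j + 1)).sum) :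
    ((Finset.range L.length).filter fun a => (L.take a).sum < r).card = j + 1 := by
  have hset : ((Finset.range L.length).filter fun a => (L.take a).sum < r)
      = Finset.range (j + 1) := by
    ext a
    simp only [Finset.mem_filter, Finset.mem_range]
    constructor
    · rintro ⟨haN, ha⟩
      by_contra hc
      have hle : j + 1 ≤ a := by omega
      have := sum_take_mono L hle
      omega
    · intro ha
      exact ⟨by omega, lt_of_le_of_lt (sum_take_mono L (show a ≤ j by omega)) h1⟩
  rw [hset, Finset.card_range]

lemma resTrow_eq (e : ℕ) (L : List ℕ) {j r : ℕ} (hjN : j < L.length)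
    (h1 : (L.take j).sum < r) (h2 : r ≤ (L.take (j + 1)).sum) :
    resTrow e L r = ((r - (L.take j).sum : ℕ) : ZMod e) - 1 - (j : ZMod e) := by
  have hc := row_card L hjN h1 h2
  have hdef : resTrow e L r =
      ((r - (L.take ((((Finset.range L.length).filter fun a => (L.take a).sum < r).card) - 1)).sum : ℕ) : ZMod e)
        - 1 - (((((Finset.range L.length).filter fun a => (L.take a).sum < r).card) - 1 : ℕ) : ZMod e) := rfl
  rw [hdef, hc]
  simp

lemma mem_legEntries {L : List ℕ} {k r : ℕ} :
    r ∈ legEntries L k ↔ ∃ a, 1 ≤ a ∧ a ≤ k ∧ (L.take a).sum + 1 = r := by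
  simp [legEntries, Finset.mem_image, Finset.mem_Icc, and_assoc]

lemma resHook_leg (e : ℕ) (L : List ℕ) (hpos : ∀ x ∈ L, 0 < x) {k a : ℕ}
    (ha1 : 1 ≤ a) (hak : a ≤ k) (hkN : k ≤ L.length) :
    resHook e L k ((L.take a).sum + 1) = -(a : ZMod e) := by
  have hmem : (L.take a).sum + 1 ∈ legEntries L k := mem_legEntries.2 ⟨a, ha1, hak, rfl⟩
  unfold resHook
  rw [if_pos hmem]
  have hset : ((Finset.Icc 1 k).filter fun b => (L.take b).sum + 1 ≤ (L.take a).sum + 1)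
      = Finset.Icc 1 a := by
    ext b
    simp only [Finset.mem_filter, Finset.mem_Icc]
    constructor
    · rintro ⟨⟨hb1, hbk⟩, hb⟩
      refine ⟨hb1, ?_⟩
      by_contra hc
      have := sum_take_strict L hpos (show a < b by omega) (le_trans hbk hkN)
      omega
    · rintro ⟨hb1, hba⟩
      exact ⟨⟨hb1, le_trans hba hak⟩, by have := sum_take_mono L hba; omega⟩
  rw [hset, Nat.card_Icc]
  simp

lemma resHook_nonleg (e : ℕ) (L : List ℕ) (hpos : ∀ x ∈ L, 0 < x) {k r : ℕ}
    (hkN : k ≤ L.length) (hr : r ∉ legEntries L k) :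
    resHook e L k r =
      ((r - 1 - ((Finset.Icc 1 k).filter fun a => (L.take a).sum + 1 < r).card : ℕ) : ZMod e) := by
  unfold resHook
  rw [if_neg hr]
  congr 2
  unfold legEntries
  rw [Finset.filter_image]
  apply Finset.card_image_of_injOn
  intro x hx y hy hxy
  simp only [Finset.coe_filter, Set.mem_setOf_eq, Finset.mem_Icc] at hx hy
  have hxy' : (L.take x).sum = (L.take y).sum := by simpa using hxy
  by_contra hne
  rcases Nat.lt_or_ge x y with h | h
  · have := sum_take_strict L hpos h (le_trans hy.1.2 hkN); omega
  · have hlt : y < x := by omega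
    have := sum_take_strict L hpos hlt (le_trans hx.1.2 hkN); omega

lemma leg_count_low (L : List ℕ) (hpos : ∀ x ∈ L, 0 < x) {k j r : ℕ} (hjk : j ≤ k)
    (hkN : k < L.length) (h1 : (L.take j).sum < r) (h2 : r ≤ (L.take (j + 1)).sum)
    (hr : r ∉ legEntries L k) :
    ((Finset.Icc 1 k).filter fun a => (L.take a).sum + 1 < r).card = j := by
  have hset : ((Finset.Icc 1 k).filter fun a => (L.take a).sum + 1 < r) = Finset.Icc 1 j := by
    ext a
    simp only [Finset.mem_filter, Finset.mem_Icc]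
    constructor
    · rintro ⟨⟨ha1, hak⟩, ha⟩
      refine ⟨ha1, ?_⟩
      by_contra hc
      have := sum_take_mono L (show j + 1 ≤ a by omega)
      omega
    · rintro ⟨ha1, haj⟩
      refine ⟨⟨ha1, le_trans haj hjk⟩, ?_⟩
      rcases Nat.lt_or_ge a j with h | h
      · have hs := sum_take_succ' L hpos (show a < L.length by omega)
        have := sum_take_mono L (show a + 1 ≤ j from h)
        omega
      · have haj' : a = j := by omega
        subst haj'
        have hne : r ≠ (L.take a).sum + 1 := fun hh =>
          hr (mem_legEntries.2 ⟨a, ha1, le_trans haj hjk, hh.symm⟩)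
        omega
  rw [hset, Nat.card_Icc]
  omega

lemma leg_count_high (L : List ℕ) (hpos : ∀ x ∈ L, 0 < x) {k j r : ℕ} (hjk : k < j)
    (hjN : j ≤ L.length) (h1 : (L.take j).sum < r) :
    ((Finset.Icc 1 k).filter fun a => (L.take a).sum + 1 < r).card = k := by
  have hset : ((Finset.Icc 1 k).filter fun a => (L.take a).sum + 1 < r) = Finset.Icc 1 k := by
    apply Finset.filter_true_of_mem
    intro a ha
    rw [Finset.mem_Icc] at ha
    have := sum_take_strict L hpos (show a < j by omega) hjN
    omega
  rw [hset, Nat.card_Icc]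
  omega

end ResAux

/-- Lemma 5.5(iii): for a partition `μ` with `N > k+1` parts and `μ_{k+1} > 1`,
the residue sequence of `T^λ_μ` equals the residue sequence `i^μ` of `T^μ` iff
`μ = (a_1 e, ..., a_k e, a_{k+1} e - 1, ..., a_{N-1} e - 1, a_N e - 1 - m)` for
some positive integers `a_1, ..., a_N` and `0 ≤ m < e`. -/
theorem residue_match_hook_case_long (e d k N : ℕ) (he : 3 ≤ e) (L : List ℕ)
    (hlen : L.length = N) (hN : k + 1 < N) (hbig : 1 < L.getD k 0)
    (hpos : ∀ x ∈ L, 0 < x) (hsort : L.Pairwise (· ≥ ·)) (hd : L.sum = d) :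
    (∀ r, 1 ≤ r → r ≤ d → resHook e L k r = resTrow e L r) ↔
    (∃ a : ℕ → ℕ, ∃ m, m < e ∧ (∀ x, x < N → 0 < a x) ∧
      L = List.ofFn fun x : Fin N =>
        if (x : ℕ) < k then a (x : ℕ) * e
        else if (x : ℕ) + 1 < N then a (x : ℕ) * e - 1
        else a (x : ℕ) * e - 1 - m) := by
  subst hlen
  subst hd
  have hNe : NeZero e := ⟨by omega⟩
  set n := L.length with hn
  have hgetD : ∀ i (hi : i < n), L.getD i 0 = L[i]'hi := by
    intro i hi; exact List.getD_eq_getElem L 0 hi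
  have hpart2 : ∀ i, i ≤ k → 1 < L.getD i 0 := by
    intro i hi
    rcases Nat.eq_or_lt_of_le hi with h | h
    · subst h; exact hbig
    · have hin : i < n := by omega
      have hkn : k < n := by omega
      have hrel := hsort.rel_get_of_lt (a := ⟨i, hin⟩) (b := ⟨k, hkn⟩)
        (Fin.mk_lt_mk.2 h)
      rw [hgetD i hin]
      rw [hgetD k hkn] at hbig
      simp only [List.get_eq_getElem] at hrel
      omega
  have hSsucc : ∀ i, i < n → (L.take (i + 1)).sum = (L.take i).sum + L.getD i 0 := by
    intro i hi; rw [List.sum_take_succ L i hi, hgetD i hi]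
  have hStot : (L.take n).sum = L.sum := by rw [List.take_length]
  have main : (∀ r, 1 ≤ r → r ≤ L.sum → resHook e L k r = resTrow e L r) ↔
      ((∀ j, j ≤ k → (((L.take j).sum : ℕ) : ZMod e) = 0) ∧
       (∀ j, k < j → j < n →
          (((L.take j).sum : ℕ) : ZMod e) = (k : ZMod e) - (j : ZMod e))) := by
    constructor
    · intro H
      constructor
      · intro j hjk
        rcases Nat.eq_zero_or_pos j with rfl | hj1
        · simp
        · set r := (L.take j).sum + 2 with hr
          have hjn : j < n := by omega
          have h2le : 2 ≤ L.getD j 0 := hpart2 j hjk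
          have hr2 : r ≤ (L.take (j + 1)).sum := by rw [hSsucc j hjn]; omega
          have hrsum : r ≤ L.sum := le_trans hr2
            (by rw [← hStot]; exact ResAux.sum_take_mono L (by omega))
          have hnleg : r ∉ legEntries L k := by
            intro hmem
            obtain ⟨b, hb1, hbk, hb⟩ := ResAux.mem_legEntries.1 hmem
            rcases Nat.lt_or_ge b (j + 1) with h | h
            · have := ResAux.sum_take_mono L (show b ≤ j by omega); omega
            · have := ResAux.sum_take_mono L (show j + 1 ≤ b from h); omega
          have hE := H r (by omega) hrsum
          rw [ResAux.resHook_nonleg e L hpos (by omega) hnleg,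
              ResAux.leg_count_low L hpos hjk (by omega) (by omega) hr2 hnleg,
              ResAux.resTrow_eq e L hjn (by omega) hr2] at hE
          have hjS : j ≤ (L.take j).sum := ResAux.le_sum_take L hpos (by omega)
          have e1 : r - 1 - j = (L.take j).sum + 1 - j := by omega
          have e2 : r - (L.take j).sum = 2 := by omega
          rw [e1, e2, Nat.cast_sub (by omega : j ≤ (L.take j).sum + 1)] at hE
          push_cast [-Nat.cast_list_sum] at hE
          linear_combination hE
      · intro j hkj hjn
        set r := (L.take j).sum + 1 with hr
        have hr2 : r ≤ (L.take (j + 1)).sum := ResAux.sum_take_succ' L hpos hjn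
        have hrsum : r ≤ L.sum := le_trans hr2
          (by rw [← hStot]; exact ResAux.sum_take_mono L (by omega))
        have hnleg : r ∉ legEntries L k := by
          intro hmem
          obtain ⟨b, hb1, hbk, hb⟩ := ResAux.mem_legEntries.1 hmem
          have := ResAux.sum_take_strict L hpos (show b < j by omega) (by omega)
          omega
        have hE := H r (by omega) hrsum
        rw [ResAux.resHook_nonleg e L hpos (by omega) hnleg,
            ResAux.leg_count_high L hpos hkj (by omega) (by omega),
            ResAux.resTrow_eq e L hjn (by omega) hr2] at hE
        have hjS : j ≤ (L.take j).sum := ResAux.le_sum_take L hpos (by omega)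
        have e1 : r - 1 - k = (L.take j).sum - k := by omega
        have e2 : r - (L.take j).sum = 1 := by omega
        rw [e1, e2, Nat.cast_sub (by omega : k ≤ (L.take j).sum)] at hE
        push_cast [-Nat.cast_list_sum] at hE
        linear_combination hE
    · rintro ⟨C1, C2⟩ r hr1 hr2
      set j := Nat.findGreatest (fun a => (L.take a).sum < r) n with hjdef
      have hPj : (L.take j).sum < r :=
        Nat.findGreatest_spec (P := fun a => (L.take a).sum < r) (Nat.zero_le n)
          (by simp; omega)
      have hjn' : j ≤ n := Nat.findGreatest_le n
      have hjn : j < n := by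
        by_contra hc
        have hjeq : j = n := by omega
        rw [hjeq, hStot] at hPj
        omega
      have hup : r ≤ (L.take (j + 1)).sum := by
        have h1 : Nat.findGreatest (fun a => (L.take a).sum < r) n < j + 1 := by
          rw [← hjdef]; omega
        have hng : ¬ (L.take (j + 1)).sum < r :=
          Nat.findGreatest_is_greatest (P := fun a => (L.take a).sum < r) h1 (by omega)
        omega
      by_cases hleg : r ∈ legEntries L k
      · obtain ⟨b, hb1, hbk, hb⟩ := ResAux.mem_legEntries.1 hleg
        subst hb
        rw [ResAux.resHook_leg e L hpos hb1 hbk (by omega),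
            ResAux.resTrow_eq e L (show b < n by omega) (by omega)
              (ResAux.sum_take_succ' L hpos (show b < n by omega))]
        simp
      · rcases le_or_gt j k with hjk | hjk
        · rw [ResAux.resHook_nonleg e L hpos (by omega) hleg,
              ResAux.leg_count_low L hpos hjk (by omega) hPj hup hleg,
              ResAux.resTrow_eq e L hjn hPj hup]
          have hjS : j ≤ (L.take j).sum := ResAux.le_sum_take L hpos (by omega)
          rw [Nat.cast_sub (by omega : j ≤ r - 1), Nat.cast_sub (by omega : 1 ≤ r),
              Nat.cast_sub (by omega : (L.take j).sum ≤ r)]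
          rw [C1 j hjk]
          push_cast
          ring
        · rw [ResAux.resHook_nonleg e L hpos (by omega) hleg,
              ResAux.leg_count_high L hpos hjk (by omega) hPj,
              ResAux.resTrow_eq e L hjn hPj hup]
          have hjS : j ≤ (L.take j).sum := ResAux.le_sum_take L hpos (by omega)
          rw [Nat.cast_sub (by omega : k ≤ r - 1), Nat.cast_sub (by omega : 1 ≤ r),
              Nat.cast_sub (by omega : (L.take j).sum ≤ r)]
          rw [C2 j hjk hjn]
          push_cast
          ring
  rw [main]
  constructor
  · rintro ⟨C1, C2⟩
    have C2' : ∀ j, k ≤ j → j < n →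
        (((L.take j).sum : ℕ) : ZMod e) = (k : ZMod e) - (j : ZMod e) := by
      intro j h1 h2
      rcases Nat.eq_or_lt_of_le h1 with h | h
      · rw [← h, C1 k le_rfl]
        ring
      · exact C2 j h h2
    have hdvd0 : ∀ i, i < k → e ∣ L.getD i 0 := by
      intro i hik
      have hs := hSsucc i (by omega)
      have h1 := C1 i (by omega)
      have h2 := C1 (i + 1) (by omega)
      have hz : ((L.getD i 0 : ℕ) : ZMod e) = 0 := by
        have hc : (((L.take i).sum + L.getD i 0 : ℕ) : ZMod e) = 0 := by rw [← hs]; exact h2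
        push_cast [-Nat.cast_list_sum] at hc
        rw [h1] at hc
        simpa using hc
      exact (ZMod.natCast_eq_zero_iff _ e).1 hz
    have hdvd1 : ∀ i, k ≤ i → i + 1 < n → e ∣ (L.getD i 0 + 1) := by
      intro i h1 h2
      have hs := hSsucc i (by omega)
      have hc1 := C2' i h1 (by omega)
      have hc2 := C2' (i + 1) (by omega) h2
      have hz : ((L.getD i 0 + 1 : ℕ) : ZMod e) = 0 := by
        have hc : (((L.take i).sum + L.getD i 0 : ℕ) : ZMod e)
            = (k : ZMod e) - ((i + 1 : ℕ) : ZMod e) := by rw [← hs]; exact hc2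
        push_cast [-Nat.cast_list_sum] at hc
        rw [hc1] at hc
        push_cast
        linear_combination hc
      exact (ZMod.natCast_eq_zero_iff _ e).1 hz
    refine ⟨fun x => if x < k then L.getD x 0 / e
        else if x + 1 < n then (L.getD x 0 + 1) / e else L.getD x 0 / e + 1,
      e - 1 - L.getD (n - 1) 0 % e, by omega, ?_, ?_⟩
    · intro x hx
      by_cases h1 : x < k
      · simp only [if_pos h1]
        have hd0 := hdvd0 x h1
        have hp : 0 < L.getD x 0 := by
          rw [hgetD x (by omega)]; exact hpos _ (List.getElem_mem _)
        exact Nat.div_pos (Nat.le_of_dvd hp hd0) (by omega)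
      · by_cases h2 : x + 1 < n
        · simp only [if_neg h1, if_pos h2]
          exact Nat.div_pos (Nat.le_of_dvd (by omega) (hdvd1 x (by omega) h2)) (by omega)
        · simp only [if_neg h1, if_neg h2]; exact Nat.succ_pos _
    · apply List.ext_getElem
      · simp [hn]
      · intro i hi1 hi2
        rw [List.getElem_ofFn]
        simp only [Fin.val_mk]
        rw [show L[i] = L.getD i 0 from (List.getD_eq_getElem L 0 hi1).symm]
        by_cases h1 : i < k
        · simp only [if_pos h1]
          have := Nat.div_mul_cancel (hdvd0 i h1)
          omega
        · simp only [if_neg h1]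
          by_cases h2 : i + 1 < n
          · simp only [if_pos h2]
            have := Nat.div_mul_cancel (hdvd1 i (by omega) h2)
            omega
          · simp only [if_neg h2]
            have hie : i = n - 1 := by omega
            subst hie
            have hmod := Nat.div_add_mod' (L.getD (n - 1) 0) e
            have hmlt : L.getD (n - 1) 0 % e < e := Nat.mod_lt _ (by omega)
            rw [Nat.add_mul, Nat.one_mul]
            omega
  · rintro ⟨a, m, hm, hapos, hL⟩
    have hLval : ∀ i, i < n → L.getD i 0 =
        if i < k then a i * e else if i + 1 < n then a i * e - 1 else a i * e - 1 - m := by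
      intro i hi
      rw [hL, List.getD_eq_getElem _ 0 (by simpa using hi), List.getElem_ofFn]
    have hcast0 : ∀ i, i < k → ((L.getD i 0 : ℕ) : ZMod e) = 0 := by
      intro i hik
      rw [hLval i (by omega), if_pos hik]
      push_cast
      rw [ZMod.natCast_self]
      ring
    have hcast1 : ∀ i, k ≤ i → i + 1 < n → ((L.getD i 0 : ℕ) : ZMod e) = -1 := by
      intro i h1 h2
      rw [hLval i (by omega), if_neg (by omega), if_pos h2]
      have hge : e ≤ a i * e := Nat.le_mul_of_pos_left e (hapos i (by omega))
      rw [Nat.cast_sub (by omega : 1 ≤ a i * e)]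
      push_cast
      rw [ZMod.natCast_self]
      ring
    have C1 : ∀ j, j ≤ k → (((L.take j).sum : ℕ) : ZMod e) = 0 := by
      intro j
      induction j with
      | zero => intro _; simp
      | succ i ih =>
          intro h
          rw [hSsucc i (by omega)]
          push_cast [-Nat.cast_list_sum]
          rw [ih (by omega), hcast0 i (by omega)]
          ring
    refine ⟨C1, ?_⟩
    have C2 : ∀ t, k + t < n → (((L.take (k + t)).sum : ℕ) : ZMod e)
        = (k : ZMod e) - ((k + t : ℕ) : ZMod e) := by
      intro t
      induction t with
      | zero =>
          intro _
          rw [Nat.add_zero, C1 k le_rfl]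
          ring
      | succ s ih =>
          intro h
          have harg : k + (s + 1) = (k + s) + 1 := by omega
          rw [harg, hSsucc (k + s) (by omega)]
          push_cast [-Nat.cast_list_sum]
          rw [ih (by omega), hcast1 (k + s) (by omega) (by omega)]
          push_cast
          ring
    intro j h1 h2
    have hj : j = k + (j - k) := by omega
    rw [hj]
    exact C2 (j - k) (by omega)
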